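/- For any linear map a : ℝⁿ → ℝ^m, the n-vector ∧_n(Id ⊕ a)·λ, where λ = e₁∧…∧e_n, decomposes as the sum over all subsets I of {1,…,n} of σ(I) e_I ∧ (∧_{|I^c|} a · e_{I^c}), where the exterior products are taken in ∧^n(ℝⁿ ⊕ ℝ^m). -/

import Mathlib

open ExteriorAlgebra

/-- The wedge, in the exterior algebra of `V`, of the vectors `f i` for `i ∈ I`,
taken in increasing order. -/
noncomputable def wedgeOver {V : Type*} [AddCommGroup V] [Module ℝ V]
    {n : ℕ} (I : Finset (Fin n)) (f : Fin n → V) : ExteriorAlgebra ℝ V :=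
  ((I.sort (· ≤ ·)).map fun i => ExteriorAlgebra.ι ℝ (f i)).prod

namespace WedgeAux

/-- The reordering sign. -/
def eps {n : ℕ} : List (Fin n) → Finset (Fin n) → ℝ
  | [], _ => 1
  | a :: l, I => (if a ∈ I then 1 else (-1 : ℝ) ^ (l.filter (· ∈ I)).length) * eps l I

lemma eps_mul_self {n : ℕ} : ∀ (l : List (Fin n)) (I : Finset (Fin n)),
    eps l I * eps l I = 1
  | [], I => by simp [eps]
  | a :: l, I => by
    rw [eps, mul_mul_mul_comm, eps_mul_self l I, mul_one]
    split
    · norm_num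
    · rw [← pow_add, ← two_mul, pow_mul]
      norm_num

variable {A : Type*} [Ring A] [Algebra ℝ A]

lemma mul_list_prod_anticomm {ιt : Type*} (z : ιt → A) (w : A)
    (h : ∀ i, w * z i = -(z i * w)) :
    ∀ l : List ιt, w * (l.map z).prod = ((-1 : ℝ) ^ l.length) • ((l.map z).prod * w)
  | [] => by simp
  | a :: l => by
    rw [List.map_cons, List.prod_cons, List.length_cons, ← mul_assoc, h a, neg_mul, mul_assoc,
      mul_list_prod_anticomm z w h l, mul_smul_comm, ← neg_smul, ← mul_assoc, pow_succ]
    ring_nf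

lemma prod_if_eq_eps {n : ℕ} (z w : Fin n → A)
    (hwz : ∀ i j, w i * z j = -(z j * w i)) :
    ∀ (l : List (Fin n)) (I : Finset (Fin n)),
    (l.map fun i => if i ∈ I then z i else w i).prod
      = eps l I • (((l.filter (· ∈ I)).map z).prod * ((l.filter (· ∉ I)).map w).prod)
  | [], I => by simp [eps]
  | a :: l, I => by
    rw [List.map_cons, List.prod_cons, prod_if_eq_eps z w hwz l I]
    by_cases h : a ∈ I
    · rw [if_pos h, eps, if_pos h, one_mul,
        List.filter_cons_of_pos (by simpa using h),
        List.filter_cons_of_neg (by simpa using h),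
        List.map_cons, List.prod_cons, mul_smul_comm, mul_assoc]
    · rw [if_neg h, eps, if_neg h,
        List.filter_cons_of_neg (by simpa using h),
        List.filter_cons_of_pos (by simpa using h),
        List.map_cons, List.prod_cons, mul_smul_comm, ← mul_assoc,
        mul_list_prod_anticomm z (w a) (fun i => hwz a i) (l.filter (· ∈ I)),
        smul_mul_assoc, smul_smul, mul_comm (eps l I), mul_assoc]

lemma prod_add_expand {n : ℕ} (x y : Fin n → A) :
    ∀ l : List (Fin n), l.Nodup →
    (l.map fun i => x i + y i).prod
      = ∑ I ∈ l.toFinset.powerset, (l.map fun i => if i ∈ I then x i else y i).prod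
  | [], _ => by simp
  | a :: l, hnd => by
    have ha : a ∉ l := (List.nodup_cons.mp hnd).1
    have ha' : a ∉ l.toFinset := by simpa using ha
    rw [List.map_cons, List.prod_cons, prod_add_expand x y l (List.nodup_cons.mp hnd).2,
      List.toFinset_cons, Finset.powerset_insert, Finset.sum_union, add_mul,
      Finset.mul_sum, Finset.mul_sum, Finset.sum_image, add_comm]
    · congr 1
      · -- y a part
        refine Finset.sum_congr rfl fun I hI => ?_
        have haI : a ∉ I := fun h => ha' (Finset.mem_powerset.mp hI h)
        rw [List.map_cons, List.prod_cons, if_neg haI]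
      · -- x a part, indexed by insert a I
        refine Finset.sum_congr rfl fun I hI => ?_
        have haI : a ∉ I := fun h => ha' (Finset.mem_powerset.mp hI h)
        rw [List.map_cons, List.prod_cons, if_pos (Finset.mem_insert_self a I)]
        congr 2
        refine List.map_congr_left fun i hi => ?_
        have : i ≠ a := fun h => ha (h ▸ hi)
        simp [Finset.mem_insert, this]
    · intro I hI J hJ hIJ
      have haI : a ∉ I := fun h => ha' (Finset.mem_powerset.mp hI h)
      have haJ : a ∉ J := fun h => ha' (Finset.mem_powerset.mp hJ h)
      rw [← Finset.erase_insert haI, ← Finset.erase_insert haJ, hIJ]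
    · rw [Finset.disjoint_left]
      rintro I hI hI2
      obtain ⟨J, hJ, rfl⟩ := Finset.mem_image.mp hI2
      exact ha' (Finset.mem_powerset.mp hI (Finset.mem_insert_self a J))

lemma filter_sort {n : ℕ} (s : Finset (Fin n)) (p : Fin n → Prop) [DecidablePred p] :
    (Finset.sort s (· ≤ ·)).filter (fun i => p i) = Finset.sort (s.filter p) (· ≤ ·) := by
  refine List.Perm.eq_of_pairwise' ((Finset.pairwise_sort _ _).filter _) (Finset.pairwise_sort _ _) ?_
  refine Multiset.coe_eq_coe.mp ?_
  rw [← Multiset.filter_coe, Finset.sort_eq, Finset.sort_eq, Finset.filter_val]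

lemma wedgeOver_univ {V : Type*} [AddCommGroup V] [Module ℝ V] {n : ℕ} (f : Fin n → V) :
    wedgeOver Finset.univ f = ιMulti ℝ n f := by
  rw [ιMulti_apply, wedgeOver, Fin.sort_univ, List.ofFn_eq_map]

lemma wedge_univ_ne_zero (n : ℕ) :
    wedgeOver (V := Fin n → ℝ) Finset.univ (fun i => Pi.single i (1 : ℝ)) ≠ 0 := by
  rw [wedgeOver_univ]
  intro h
  set f : ∀ i, (Fin n → ℝ) [⋀^Fin i]→ₗ[ℝ] ℝ := fun i =>
    if hi : i = n then hi ▸ (Pi.basisFun ℝ (Fin n)).det else 0 with hf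
  have h2 := congrArg (liftAlternating f) h
  rw [liftAlternating_apply_ιMulti, map_zero] at h2
  have hfn : f n = (Pi.basisFun ℝ (Fin n)).det := by simp [hf]
  rw [hfn] at h2
  have h3 : (Pi.basisFun ℝ (Fin n)).det ⇑(Pi.basisFun ℝ (Fin n)) = 0 := by
    rw [← h2]
    congr 1
    funext i
    simp [Pi.basisFun_apply]
  rw [Module.Basis.det_self] at h3
  exact one_ne_zero h3

end WedgeAux

/-- for a linear map `a : ℝⁿ → ℝᵐ`, the `n`-vector `∧_n(Id ⊕ a)·λ`,
`λ = e₁∧…∧e_n`, decomposes as `∑_{I ⊆ {1,…,n}} σ(I) e_I ∧ (∧_{|I^c|} a · e_{I^c})`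
in `⋀ⁿ(ℝⁿ ⊕ ℝᵐ)`, where `σ(I)` is the sign with `e_I ∧ e_{I^c} = σ(I) e₁∧…∧e_n`. -/
theorem wedge_graph_decomposition (n m : ℕ)
    (a : (Fin n → ℝ) →ₗ[ℝ] (Fin m → ℝ))
    (σ : Finset (Fin n) → ℝ)
    (hσ : ∀ I : Finset (Fin n),
      wedgeOver I (fun i => Pi.single i (1 : ℝ)) *
        wedgeOver Iᶜ (fun i => Pi.single i (1 : ℝ))
      = σ I • wedgeOver Finset.univ (fun i => Pi.single i (1 : ℝ))) :
    wedgeOver (V := (Fin n → ℝ) × (Fin m → ℝ)) Finset.univ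
        (fun i => (Pi.single i (1 : ℝ), a (Pi.single i (1 : ℝ))))
      = ∑ I : Finset (Fin n),
          σ I •
            (wedgeOver (V := (Fin n → ℝ) × (Fin m → ℝ)) I
                (fun i => (Pi.single i (1 : ℝ), 0)) *
              wedgeOver (V := (Fin n → ℝ) × (Fin m → ℝ)) Iᶜ
                (fun i => (0, a (Pi.single i (1 : ℝ))))) := by
  classical
  set V := (Fin n → ℝ) × (Fin m → ℝ)
  set e : Fin n → (Fin n → ℝ) := fun i => Pi.single i (1 : ℝ) with he
  set l : List (Fin n) := Finset.sort (Finset.univ : Finset (Fin n)) (· ≤ ·) with hl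
  have hfilter_mem : ∀ I : Finset (Fin n),
      l.filter (· ∈ I) = Finset.sort I (· ≤ ·) := by
    intro I
    rw [hl, WedgeAux.filter_sort Finset.univ (· ∈ I)]
    congr 1
    ext i; simp
  have hfilter_not : ∀ I : Finset (Fin n),
      l.filter (· ∉ I) = Finset.sort Iᶜ (· ≤ ·) := by
    intro I
    rw [hl, WedgeAux.filter_sort Finset.univ (· ∉ I)]
    congr 1
    ext i; simp
  -- sign identification: eps l I = σ I
  have hsign : ∀ I : Finset (Fin n), σ I = WedgeAux.eps l I := by
    intro I
    have anti : ∀ i j : Fin n, ι ℝ (e i) * ι ℝ (e j) = -(ι ℝ (e j) * ι ℝ (e i)) :=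
      fun i j => eq_neg_of_add_eq_zero_left (ι_add_mul_swap _ _)
    have h1 := WedgeAux.prod_if_eq_eps (fun i => ι ℝ (e i)) (fun i => ι ℝ (e i)) anti l I
    have h2 : (l.map fun i => if i ∈ I then ι ℝ (e i) else ι ℝ (e i)).prod
        = wedgeOver Finset.univ e := by
      rw [wedgeOver, ← hl]
      congr 1
      exact List.map_congr_left fun i _ => ite_self _
    rw [h2, hfilter_mem, hfilter_not] at h1
    have h3 : wedgeOver Finset.univ e
        = WedgeAux.eps l I • (wedgeOver I e * wedgeOver Iᶜ e) := h1
    rw [hσ I, smul_smul] at h3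
    have h4 : (1 - WedgeAux.eps l I * σ I) • wedgeOver Finset.univ e = 0 := by
      rw [sub_smul, one_smul, sub_eq_zero]
      exact h3
    have h5 : (1 : ℝ) - WedgeAux.eps l I * σ I = 0 := by
      rcases smul_eq_zero.mp h4 with h | h
      · exact h
      · exact absurd h (WedgeAux.wedge_univ_ne_zero n)
    have h6 : WedgeAux.eps l I * σ I = 1 := by linarith
    calc σ I = (WedgeAux.eps l I * WedgeAux.eps l I) * σ I := by
              rw [WedgeAux.eps_mul_self, one_mul]
      _ = WedgeAux.eps l I * (WedgeAux.eps l I * σ I) := by ring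
      _ = WedgeAux.eps l I := by rw [h6, mul_one]
  -- now the main computation
  set x : Fin n → ExteriorAlgebra ℝ V := fun i => ι ℝ ((e i, 0) : V) with hx
  set y : Fin n → ExteriorAlgebra ℝ V := fun i => ι ℝ ((0, a (e i)) : V) with hy
  have hxy : ∀ i, (ι ℝ ((e i, a (e i)) : V)) = x i + y i := by
    intro i
    rw [hx, hy, ← map_add]
    congr 1
    rw [Prod.mk_add_mk, add_zero, zero_add]
  have step1 : wedgeOver (V := V) Finset.univ (fun i => (e i, a (e i)))
      = (l.map fun i => x i + y i).prod := by
    rw [wedgeOver, ← hl]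
    congr 1
    exact List.map_congr_left fun i _ => hxy i
  have anti : ∀ i j : Fin n, y i * x j = -(x j * y i) :=
    fun i j => eq_neg_of_add_eq_zero_left (ι_add_mul_swap _ _)
  rw [step1, WedgeAux.prod_add_expand x y l (Finset.sort_nodup _ _)]
  have htf : l.toFinset = (Finset.univ : Finset (Fin n)) := by
    ext i; simp [hl, Finset.mem_sort]
  rw [htf, Finset.powerset_univ]
  refine Finset.sum_congr rfl fun I _ => ?_
  rw [WedgeAux.prod_if_eq_eps x y anti l I, hfilter_mem, hfilter_not, hsign I]
  rfl
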